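/- Let R be a commutative ring, σ a type, and let n = 2^m with m ≥ 1. Let A be an n×n matrix over MvPolynomial σ R such that every entry of A has total degree at most d. Then for all 0 ≤ k ≤ m−1, every entry of the adjugate matrix adj(Δ_k(A)) of the iterated fraction-free Schur complement Δ_k(A) has total degree at most n^(k+2) · d. -/
import Mathlib


/-- The fraction-free Schur complement `Δ(M) = det(M11) • M22 - M21 * adj(M11) * M12`
of a `2s × 2s` matrix `M`, where `M11, M12, M21, M22` are the `s × s` blocks
(top-left, top-right, bottom-left, bottom-right) of `M`. -/
def ffSchur {R : Type*} [CommRing R] {s : ℕ} (M : Matrix (Fin (2 * s)) (Fin (2 * s)) R) :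
    Matrix (Fin s) (Fin s) R :=
  let top : Fin s → Fin (2 * s) := fun a => ⟨a.1, by have := a.2; omega⟩
  let bot : Fin s → Fin (2 * s) := fun a => ⟨s + a.1, by have := a.2; omega⟩
  let M11 := M.submatrix top top
  let M12 := M.submatrix top bot
  let M21 := M.submatrix bot top
  let M22 := M.submatrix bot bot
  M11.det • M22 - M21 * M11.adjugate * M12

/-- Reindexing a square matrix along an equality of sizes. -/
def castMat {R : Type*} {a b : ℕ} (h : a = b) (M : Matrix (Fin a) (Fin a) R) :
    Matrix (Fin b) (Fin b) R :=
  M.submatrix (Fin.cast h.symm) (Fin.cast h.symm)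

/-- The fraction-free Schur complement of a matrix of size `2 ^ (t + 1)`,
a matrix of size `2 ^ t`. -/
def ffSchurPow {R : Type*} [CommRing R] (t : ℕ)
    (M : Matrix (Fin (2 ^ (t + 1))) (Fin (2 ^ (t + 1))) R) :
    Matrix (Fin (2 ^ t)) (Fin (2 ^ t)) R :=
  ffSchur (castMat (by rw [pow_succ]; ring) M)

/-- The iterated fraction-free Schur complement: `ffSchurIter k t M` is
`Δ_k(M) = Δ(Δ(⋯Δ(M)⋯))` (`k + 1` applications of `Δ`), taking a matrix of size
`2 ^ (t + 1 + k)` to a matrix of size `2 ^ t`. -/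
def ffSchurIter {R : Type*} [CommRing R] :
    (k t : ℕ) → Matrix (Fin (2 ^ (t + 1 + k))) (Fin (2 ^ (t + 1 + k))) R →
      Matrix (Fin (2 ^ t)) (Fin (2 ^ t)) R
  | 0, t, M => ffSchurPow t M
  | k + 1, t, M => ffSchurIter k t (ffSchurPow (t + 1 + k) M)

section Aux

open MvPolynomial Matrix

variable {R : Type*} [CommRing R] {σ : Type*}

lemma det_deg {n : ℕ} (M : Matrix (Fin n) (Fin n) (MvPolynomial σ R)) {e : ℕ}
    (h : ∀ i j, (M i j).totalDegree ≤ e) : M.det.totalDegree ≤ n * e := by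
  rw [Matrix.det_apply]
  refine totalDegree_finsetSum_le fun τ _ => ?_
  refine (totalDegree_smul_le _ _).trans ((totalDegree_finset_prod _ _).trans ?_)
  calc ∑ i : Fin n, (M (τ i) i).totalDegree ≤ ∑ _i : Fin n, e :=
        Finset.sum_le_sum fun i _ => h _ _
    _ = n * e := by simp [mul_comm]

lemma adj_deg {n : ℕ} (M : Matrix (Fin n) (Fin n) (MvPolynomial σ R)) {e : ℕ}
    (h : ∀ i j, (M i j).totalDegree ≤ e) :
    ∀ i j, (M.adjugate i j).totalDegree ≤ n * e := by
  intro i j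
  rw [Matrix.adjugate_apply]
  refine det_deg _ fun a b => ?_
  rw [Matrix.updateRow_apply]
  split
  · rcases eq_or_ne b i with rfl | hb
    · simp
    · simp [Pi.single_apply, hb]
  · exact h a b

lemma mul_deg {l m n : Type*} [Fintype m] (A : Matrix l m (MvPolynomial σ R))
    (B : Matrix m n (MvPolynomial σ R)) {a b : ℕ}
    (hA : ∀ i j, (A i j).totalDegree ≤ a) (hB : ∀ i j, (B i j).totalDegree ≤ b) :
    ∀ i j, ((A * B) i j).totalDegree ≤ a + b := by
  intro i j
  rw [Matrix.mul_apply]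
  exact totalDegree_finsetSum_le fun x _ =>
    (totalDegree_mul _ _).trans (add_le_add (hA _ _) (hB _ _))

lemma ffSchur_deg {s : ℕ} (M : Matrix (Fin (2 * s)) (Fin (2 * s)) (MvPolynomial σ R)) {e : ℕ}
    (h : ∀ i j, (M i j).totalDegree ≤ e) :
    ∀ i j, ((ffSchur M) i j).totalDegree ≤ (s + 2) * e := by
  have key : ∀ (M11 M12 M21 M22 : Matrix (Fin s) (Fin s) (MvPolynomial σ R)),
      (∀ i j, (M11 i j).totalDegree ≤ e) → (∀ i j, (M12 i j).totalDegree ≤ e) →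
      (∀ i j, (M21 i j).totalDegree ≤ e) → (∀ i j, (M22 i j).totalDegree ≤ e) →
      ∀ i j, ((M11.det • M22 - M21 * M11.adjugate * M12) i j).totalDegree ≤ (s + 2) * e := by
    intro M11 M12 M21 M22 h11 h12 h21 h22 i j
    rw [Matrix.sub_apply, Matrix.smul_apply, smul_eq_mul]
    refine (totalDegree_sub _ _).trans (max_le ?_ ?_)
    · refine (totalDegree_mul _ _).trans ?_
      refine (add_le_add (det_deg M11 h11) (h22 i j)).trans ?_
      ring_nf; omega
    · have h1 := mul_deg M21 M11.adjugate h21 (adj_deg M11 h11)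
      refine (mul_deg _ M12 h1 h12 i j).trans ?_
      ring_nf; omega
  exact key _ _ _ _ (fun i j => h _ _) (fun i j => h _ _) (fun i j => h _ _) (fun i j => h _ _)

lemma two_pow_add_two_le (t : ℕ) : 2 ^ t + 2 ≤ 2 ^ (t + 2) := by
  have h1 : 1 ≤ 2 ^ t := Nat.one_le_two_pow
  have h2 : 2 ^ (t + 2) = 4 * 2 ^ t := by ring
  omega

lemma ffSchurPow_deg (t : ℕ)
    (M : Matrix (Fin (2 ^ (t + 1))) (Fin (2 ^ (t + 1))) (MvPolynomial σ R)) {e : ℕ}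
    (h : ∀ i j, (M i j).totalDegree ≤ e) :
    ∀ i j, ((ffSchurPow t M) i j).totalDegree ≤ 2 ^ (t + 2) * e := by
  intro i j
  simp only [ffSchurPow]
  refine (ffSchur_deg _ (fun i j => h _ _) i j).trans ?_
  exact Nat.mul_le_mul_right e (by simpa using two_pow_add_two_le t)

lemma iter_deg : ∀ (k t : ℕ)
    (M : Matrix (Fin (2 ^ (t + 1 + k))) (Fin (2 ^ (t + 1 + k))) (MvPolynomial σ R)) (e : ℕ),
    (∀ i j, (M i j).totalDegree ≤ e) →
    ∀ i j, ((ffSchurIter k t M) i j).totalDegree ≤ 2 ^ ((t + k + 2) * (k + 1)) * e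
  | 0, t, M, e, h => by
    intro i j
    simp only [ffSchurIter]
    refine (ffSchurPow_deg t M h i j).trans ?_
    simp
  | k + 1, t, M, e, h => by
    intro i j
    simp only [ffSchurIter]
    have hP := ffSchurPow_deg (t + 1 + k) M h
    refine (iter_deg k t _ _ hP i j).trans ?_
    rw [← mul_assoc, ← pow_add]
    refine Nat.mul_le_mul_right e (Nat.pow_le_pow_right (by norm_num) ?_)
    nlinarith
  end Aux

/-- Let `n = 2 ^ m` with `m ≥ 1`, and let `A` be an `n × n` matrix of
multivariate polynomials of total degree at most `d`.  Then for all `0 ≤ k ≤ m - 1`, every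
entry of the adjugate of the iterated fraction-free Schur complement `Δ_k(A)` has total
degree at most `n ^ (k + 2) * d`. -/
theorem totalDegree_adjugate_ffSchurIter_le {R : Type*} [CommRing R] {σ : Type*} (m d : ℕ)
    (hm : 1 ≤ m) (A : Matrix (Fin (2 ^ m)) (Fin (2 ^ m)) (MvPolynomial σ R))
    (hA : ∀ i j, (A i j).totalDegree ≤ d) (k : ℕ) (hk : k ≤ m - 1) :
    ∀ i j, (((ffSchurIter k (m - 1 - k)
          (castMat (by rw [show m - 1 - k + 1 + k = m from by omega]) A)).adjugate) i j).totalDegree ≤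
      (2 ^ m) ^ (k + 2) * d := by
  intro i j
  have hcast : ∀ i j, ((castMat (show 2 ^ m = 2 ^ (m - 1 - k + 1 + k) from by
      rw [show m - 1 - k + 1 + k = m from by omega]) A) i j).totalDegree ≤ d :=
    fun i j => hA _ _
  have h1 := iter_deg k (m - 1 - k) _ d hcast
  have h2 := adj_deg _ h1 i j
  refine h2.trans ?_
  rw [← pow_mul, ← mul_assoc, ← pow_add]
  exact Nat.mul_le_mul_right d (Nat.pow_le_pow_right (by norm_num) (by nlinarith [Nat.sub_add_cancel hm, Nat.sub_add_cancel hk]))
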